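/- Let σ ≥ 2. Then for every z ∈ (0,1) one has the exact identity ‖g_z‖_{L²(ℝ)} = (1−z²)^{1/(2σ) − 1/4} · ‖h_z‖_{L²(ℝ)}, and there exists a constant C > 0 depending only on σ (not on z) such that ‖g_z'‖_{L²(ℝ)} ≤ C · (1−z²)^{1/(2σ) + 1/4}. -/

import Mathlib

open MeasureTheory

/-- The rescaled profile `h_z(x) = (cosh(2σx) + z)^{−1/(2σ)}`. -/
noncomputable def hProf (σ z : ℝ) (x : ℝ) : ℝ :=
  (Real.cosh (2 * σ * x) + z) ^ (-(1 / (2 * σ)))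

/-- The renormalized profile `g_z`. -/
noncomputable def gProf (σ z : ℝ) (x : ℝ) : ℂ :=
  (((1 - z ^ 2) ^ (1 / (2 * σ)) * hProf σ z (Real.sqrt (1 - z ^ 2) * x) : ℝ) : ℂ) *
    Complex.exp (-Complex.I * ((Real.sqrt (1 - z ^ 2) *
      ∫ y in Set.Iic (Real.sqrt (1 - z ^ 2) * x), hProf σ z y ^ (2 * σ) : ℝ) : ℂ))

/-- Explicit derivative of `hProf`. -/
noncomputable def hD (σ z : ℝ) (x : ℝ) : ℝ :=
  -Real.sinh (2 * σ * x) * (Real.cosh (2 * σ * x) + z) ^ (-(1 / (2 * σ)) - 1)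

lemma cosh_term_pos (z : ℝ) (hz : 0 ≤ z) (x : ℝ) : 0 < Real.cosh x + z := by
  have := Real.cosh_pos (x := x); linarith

lemma hProf_pos {σ z : ℝ} (hz : 0 ≤ z) (x : ℝ) : 0 < hProf σ z x :=
  Real.rpow_pos_of_pos (cosh_term_pos z hz _) _

lemma continuous_hProf {σ z : ℝ} (hz : 0 ≤ z) : Continuous (hProf σ z) := by
  apply Continuous.rpow_const
  · exact (Real.continuous_cosh.comp (continuous_const.mul continuous_id)).add continuous_const
  · intro x; exact Or.inl (cosh_term_pos z hz _).ne'

lemma continuous_hD {σ z : ℝ} (hz : 0 ≤ z) : Continuous (hD σ z) := by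
  apply Continuous.mul
  · exact (Real.continuous_sinh.comp (continuous_const.mul continuous_id)).neg
  · apply Continuous.rpow_const
    · exact (Real.continuous_cosh.comp (continuous_const.mul continuous_id)).add continuous_const
    · intro x; exact Or.inl (cosh_term_pos z hz _).ne'

lemma hasDerivAt_hProf {σ z : ℝ} (hσ : 0 < σ) (hz : 0 ≤ z) (x : ℝ) :
    HasDerivAt (hProf σ z) (hD σ z x) x := by
  have h1 : HasDerivAt (fun y : ℝ => 2 * σ * y) (2 * σ) x := by
    simpa using (hasDerivAt_id x).const_mul (2 * σ)
  have h2 : HasDerivAt (fun y : ℝ => Real.cosh (2 * σ * y) + z)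
      (Real.sinh (2 * σ * x) * (2 * σ)) x :=
    ((Real.hasDerivAt_cosh (2 * σ * x)).comp x h1).add_const z
  have h4 := h2.rpow_const (p := -(1 / (2 * σ))) (Or.inl (cosh_term_pos z hz _).ne')
  convert h4 using 1
  · rfl
  unfold hD
  have hσ' : σ ≠ 0 := hσ.ne'
  field_simp

lemma hProf_rpow {σ z : ℝ} (hσ0 : 0 < σ) (hz : 0 ≤ z) (y : ℝ) :
    hProf σ z y ^ (2 * σ) = (Real.cosh (2 * σ * y) + z)⁻¹ := by
  unfold hProf
  rw [← Real.rpow_mul (cosh_term_pos z hz _).le,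
    show -(1 / (2 * σ)) * (2 * σ) = -1 by field_simp, Real.rpow_neg_one]

lemma hProf_rpow_nonneg {σ z : ℝ} (hz : 0 ≤ z) (y : ℝ) : 0 ≤ hProf σ z y ^ (2 * σ) :=
  Real.rpow_nonneg (hProf_pos hz y).le _

lemma hProf_rpow_le_one {σ z : ℝ} (hσ0 : 0 < σ) (hz : 0 ≤ z) (y : ℝ) :
    hProf σ z y ^ (2 * σ) ≤ 1 := by
  rw [hProf_rpow hσ0 hz]
  have h1 : (1:ℝ) ≤ Real.cosh (2 * σ * y) + z := by linarith [Real.one_le_cosh (2 * σ * y)]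
  exact inv_le_one_of_one_le₀ h1

lemma hProf_sq_le {σ z : ℝ} (hσ : 2 ≤ σ) (hz : 0 ≤ z) (y : ℝ) :
    hProf σ z y ^ 2 ≤ Real.cosh (2 * σ * y) ^ (-(1 / σ)) := by
  have hσ0 : (0:ℝ) < σ := by linarith
  have e : (-(1 / (2 * σ))) * ((2:ℕ):ℝ) = -(1 / σ) := by push_cast; field_simp
  calc hProf σ z y ^ 2 = (Real.cosh (2 * σ * y) + z) ^ (-(1 / σ)) := by
        unfold hProf
        rw [← Real.rpow_natCast ((Real.cosh (2 * σ * y) + z) ^ (-(1 / (2 * σ)))) 2,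
          ← Real.rpow_mul (cosh_term_pos z hz _).le, e]
    _ ≤ Real.cosh (2 * σ * y) ^ (-(1 / σ)) :=
        Real.rpow_le_rpow_of_nonpos (Real.cosh_pos _) (le_add_of_nonneg_right hz)
          (neg_nonpos.mpr (by positivity))

lemma hD_sq_le {σ z : ℝ} (hσ : 2 ≤ σ) (hz : 0 ≤ z) (y : ℝ) :
    hD σ z y ^ 2 ≤ Real.cosh (2 * σ * y) ^ (-(1 / σ)) := by
  have hσ0 : (0:ℝ) < σ := by linarith
  have hc := Real.cosh_pos (x := 2 * σ * y)
  have hcz := cosh_term_pos z hz (2 * σ * y)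
  have e : ((-(1 / (2 * σ)) - 1)) * ((2:ℕ):ℝ) = -(1 / σ) - 2 := by push_cast; field_simp
  have h1 : hD σ z y ^ 2 =
      Real.sinh (2 * σ * y) ^ 2 * (Real.cosh (2 * σ * y) + z) ^ (-(1 / σ) - 2) := by
    unfold hD
    rw [mul_pow, neg_sq, ← Real.rpow_natCast ((Real.cosh (2 * σ * y) + z) ^ (-(1 / (2 * σ)) - 1)) 2,
      ← Real.rpow_mul hcz.le, e]
  have h2 : (Real.cosh (2 * σ * y) + z) ^ (-(1 / σ) - 2) ≤
      Real.cosh (2 * σ * y) ^ (-(1 / σ) - 2) :=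
    Real.rpow_le_rpow_of_nonpos hc (le_add_of_nonneg_right hz)
      (by
        have h : (0:ℝ) < 1/σ := by positivity
        linarith)
  have h3 : Real.sinh (2 * σ * y) ^ 2 ≤ Real.cosh (2 * σ * y) ^ 2 := by
    have := Real.cosh_sq_sub_sinh_sq (2 * σ * y); nlinarith
  calc hD σ z y ^ 2 ≤ Real.cosh (2 * σ * y) ^ 2 * Real.cosh (2 * σ * y) ^ (-(1 / σ) - 2) := by
        rw [h1]
        exact mul_le_mul h3 h2 (Real.rpow_nonneg hcz.le _) (by positivity)
    _ = Real.cosh (2 * σ * y) ^ (-(1 / σ)) := by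
        rw [← Real.rpow_natCast (Real.cosh (2 * σ * y)) 2, ← Real.rpow_add hc]
        norm_num

lemma hProf_rpow_le {σ z : ℝ} (hσ : 2 ≤ σ) (hz : 0 ≤ z) (y : ℝ) :
    hProf σ z y ^ (2 * σ) ≤ Real.cosh (2 * σ * y) ^ (-(1 / σ)) := by
  have hσ0 : (0:ℝ) < σ := by linarith
  have hc := Real.cosh_pos (x := 2 * σ * y)
  rw [hProf_rpow hσ0 hz]
  calc (Real.cosh (2 * σ * y) + z)⁻¹ ≤ (Real.cosh (2 * σ * y))⁻¹ :=
        inv_anti₀ hc (le_add_of_nonneg_right hz)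
    _ = Real.cosh (2 * σ * y) ^ (-1 : ℝ) := (Real.rpow_neg_one _).symm
    _ ≤ Real.cosh (2 * σ * y) ^ (-(1 / σ)) := by
        apply Real.rpow_le_rpow_of_exponent_le (Real.one_le_cosh _)
        have : 1 / σ ≤ 1 := by rw [div_le_one hσ0]; linarith
        linarith

lemma hProf_mul_sq_le {σ z : ℝ} (hσ : 2 ≤ σ) (hz : 0 ≤ z) (y : ℝ) :
    (hProf σ z y * hProf σ z y ^ (2 * σ)) ^ 2 ≤ Real.cosh (2 * σ * y) ^ (-(1 / σ)) := by
  have hσ0 : (0:ℝ) < σ := by linarith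
  have h1 : (hProf σ z y ^ (2 * σ)) ^ 2 ≤ 1 :=
    pow_le_one₀ (hProf_rpow_nonneg hz y) (hProf_rpow_le_one hσ0 hz y)
  calc (hProf σ z y * hProf σ z y ^ (2 * σ)) ^ 2
      = hProf σ z y ^ 2 * (hProf σ z y ^ (2 * σ)) ^ 2 := by ring
    _ ≤ hProf σ z y ^ 2 * 1 := by
        exact mul_le_mul_of_nonneg_left h1 (sq_nonneg _)
    _ = hProf σ z y ^ 2 := by ring
    _ ≤ Real.cosh (2 * σ * y) ^ (-(1 / σ)) := hProf_sq_le hσ hz y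

lemma integrable_exp_neg_two_abs : Integrable (fun x : ℝ => Real.exp (-(2 * |x|))) := by
  have h1 : IntegrableOn (fun x : ℝ => Real.exp (-(2 * |x|))) (Set.Ioi 0) := by
    refine ((exp_neg_integrableOn_Ioi 0 (by norm_num : (0:ℝ) < 2))).congr_fun ?_ measurableSet_Ioi
    intro x hx
    simp only [abs_of_pos (show (0:ℝ) < x from hx)]
    ring_nf
  have h2 : IntegrableOn (fun x : ℝ => Real.exp (-(2 * |x|))) (Set.Iic 0) := by
    rw [← Measure.map_neg_eq_self (volume : Measure ℝ)]
    have m : MeasurableEmbedding fun x : ℝ => -x := (Homeomorph.neg ℝ).measurableEmbedding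
    rw [m.integrableOn_map_iff]
    simp_rw [Function.comp_def, abs_neg, Set.neg_preimage, Set.neg_Iic, neg_zero]
    exact Iff.mpr integrableOn_Ici_iff_integrableOn_Ioi h1
  have := h2.union h1
  rwa [Set.Iic_union_Ioi, integrableOn_univ] at this

lemma cosh_rpow_bound {σ : ℝ} (hσ : 2 ≤ σ) (x : ℝ) :
    Real.cosh (2 * σ * x) ^ (-(1 / σ)) ≤ 2 * Real.exp (-(2 * |x|)) := by
  have hσ0 : 0 < σ := by linarith
  have habs : |2 * σ * x| = 2 * σ * |x| := by
    rw [abs_mul, abs_of_pos (by positivity : (0:ℝ) < 2 * σ)]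
  have h1 : Real.exp |2 * σ * x| / 2 ≤ Real.cosh (2 * σ * x) := by
    rw [← Real.cosh_abs, Real.cosh_eq]
    have := (Real.exp_pos (-|2 * σ * x|)).le
    linarith
  have h2 : Real.cosh (2 * σ * x) ^ (-(1 / σ)) ≤
      (Real.exp |2 * σ * x| / 2) ^ (-(1 / σ)) :=
    Real.rpow_le_rpow_of_nonpos (by positivity) h1 (neg_nonpos.mpr (by positivity))
  have h3 : (Real.exp |2 * σ * x| / 2) ^ (-(1 / σ)) =
      Real.exp (-(2 * |x|)) * 2 ^ (1 / σ) := by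
    rw [Real.div_rpow (Real.exp_pos _).le (by norm_num : (0:ℝ) ≤ 2), ← Real.exp_mul, habs,
      Real.rpow_neg (by norm_num : (0:ℝ) ≤ 2), div_eq_mul_inv, inv_inv]
    congr 2
    field_simp
  have h4 : (2:ℝ) ^ (1 / σ) ≤ 2 := by
    calc (2:ℝ) ^ (1 / σ) ≤ 2 ^ (1:ℝ) :=
          Real.rpow_le_rpow_of_exponent_le one_le_two (by rw [div_le_one hσ0]; linarith)
      _ = 2 := Real.rpow_one 2
  calc Real.cosh (2 * σ * x) ^ (-(1 / σ)) ≤ (Real.exp |2 * σ * x| / 2) ^ (-(1 / σ)) := h2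
    _ = Real.exp (-(2 * |x|)) * 2 ^ (1 / σ) := h3
    _ ≤ 2 * Real.exp (-(2 * |x|)) := by
        nlinarith [Real.exp_pos (-(2 * |x|))]

lemma gProf_abs {σ z : ℝ} (hz0 : 0 ≤ z) (hz1 : z ≤ 1) (x : ℝ) :
    ‖gProf σ z x‖ =
      (1 - z ^ 2) ^ (1 / (2 * σ)) * hProf σ z (Real.sqrt (1 - z ^ 2) * x) := by
  have hw : (0:ℝ) ≤ 1 - z ^ 2 := by nlinarith
  unfold gProf
  rw [norm_mul, Complex.norm_exp]
  have h0 : (-Complex.I * ((Real.sqrt (1 - z ^ 2) *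
      ∫ y in Set.Iic (Real.sqrt (1 - z ^ 2) * x), hProf σ z y ^ (2 * σ) : ℝ) : ℂ)).re = 0 := by
    simp
  rw [h0, Real.exp_zero, mul_one, Complex.norm_real, Real.norm_eq_abs,
    abs_of_nonneg (mul_nonneg (Real.rpow_nonneg hw _) (hProf_pos hz0 _).le)]

lemma hasDerivAt_gProf {σ z : ℝ} (hσ : 2 ≤ σ) (hz0 : 0 < z) (hz1 : z < 1) (x : ℝ) :
    HasDerivAt (gProf σ z)
      (((((1 - z ^ 2) ^ (1 / (2 * σ)) *
            (Real.sqrt (1 - z ^ 2) * hD σ z (Real.sqrt (1 - z ^ 2) * x)) : ℝ) : ℂ)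
        + (((1 - z ^ 2) ^ (1 / (2 * σ)) * hProf σ z (Real.sqrt (1 - z ^ 2) * x) : ℝ) : ℂ) *
          (-Complex.I * ((Real.sqrt (1 - z ^ 2) * (Real.sqrt (1 - z ^ 2) *
            hProf σ z (Real.sqrt (1 - z ^ 2) * x) ^ (2 * σ)) : ℝ) : ℂ)))
        * Complex.exp (-Complex.I * ((Real.sqrt (1 - z ^ 2) *
            ∫ y in Set.Iic (Real.sqrt (1 - z ^ 2) * x), hProf σ z y ^ (2 * σ) : ℝ) : ℂ))) x := by
  have hσ0 : (0:ℝ) < σ := by linarith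
  set s : ℝ := Real.sqrt (1 - z ^ 2) with hsdef
  set A : ℝ := (1 - z ^ 2) ^ (1 / (2 * σ)) with hAdef
  set f : ℝ → ℝ := fun y => hProf σ z y ^ (2 * σ) with hfdef
  set H : ℝ → ℝ := fun u => ∫ y in Set.Iic u, f y with hHdef
  have hfc : Continuous f := by
    rw [hfdef]
    exact Continuous.rpow_const (continuous_hProf hz0.le)
      (fun y => Or.inl (hProf_pos hz0.le y).ne')
  have hfint : Integrable f := by
    refine Integrable.mono' (integrable_exp_neg_two_abs.const_mul 2)
      hfc.aestronglyMeasurable (Filter.Eventually.of_forall fun y => ?_)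
    rw [Real.norm_eq_abs, abs_of_nonneg (by rw [hfdef]; exact hProf_rpow_nonneg hz0.le y)]
    exact le_trans (hProf_rpow_le hσ hz0.le y) (cosh_rpow_bound hσ y)
  have hHd : ∀ u : ℝ, HasDerivAt H (f u) u := by
    intro u
    have heq : H = fun u => H 0 + ∫ y in (0:ℝ)..u, f y := by
      funext v
      rw [← intervalIntegral.integral_Iic_sub_Iic hfint.integrableOn hfint.integrableOn,
        hHdef]
      ring
    rw [heq]
    exact (intervalIntegral.integral_hasDerivAt_right (hfint.intervalIntegrable)
      (hfc.stronglyMeasurableAtFilter _ _) hfc.continuousAt).const_add _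
  have hsx : HasDerivAt (fun y : ℝ => s * y) s x := by
    simpa using (hasDerivAt_id x).const_mul s
  have hF : HasDerivAt (fun y : ℝ => A * hProf σ z (s * y)) (A * (hD σ z (s * x) * s)) x :=
    ((hasDerivAt_hProf hσ0 hz0.le (s * x)).comp x hsx).const_mul A
  have hθ : HasDerivAt (fun y : ℝ => s * H (s * y)) (s * (f (s * x) * s)) x :=
    ((hHd (s * x)).comp x hsx).const_mul s
  have hG : HasDerivAt (fun y : ℝ => Complex.exp (-Complex.I * ((s * H (s * y) : ℝ) : ℂ)))
      (Complex.exp (-Complex.I * ((s * H (s * x) : ℝ) : ℂ)) *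
        (-Complex.I * ((s * (f (s * x) * s) : ℝ) : ℂ))) x := by
    have := (hθ.ofReal_comp.const_mul (-Complex.I)).cexp
    simpa using this
  have hFc : HasDerivAt (fun y : ℝ => ((A * hProf σ z (s * y) : ℝ) : ℂ))
      (((A * (hD σ z (s * x) * s) : ℝ) : ℂ)) x := hF.ofReal_comp
  have hprod := hFc.mul hG
  have hfun : gProf σ z = fun y : ℝ =>
      ((A * hProf σ z (s * y) : ℝ) : ℂ) *
        Complex.exp (-Complex.I * ((s * H (s * y) : ℝ) : ℂ)) := rfl
  rw [hfun]
  convert hprod using 1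
  · rfl
  · rfl
  simp only [hfdef, hHdef]
  push_cast
  ring

lemma abs_expr_sq (a b c r : ℝ) :
    ‖((a : ℂ) + (b : ℂ) * (-Complex.I * (c : ℂ))) *
      Complex.exp (-Complex.I * (r : ℂ))‖ ^ 2 = a ^ 2 + (b * c) ^ 2 := by
  rw [norm_mul, Complex.norm_exp, show (-Complex.I * (r:ℂ)).re = 0 by simp, Real.exp_zero, mul_one,
    show ((a:ℂ) + (b:ℂ) * (-Complex.I * (c:ℂ))) = ((a:ℂ) + ((-(b*c) : ℝ) : ℂ) * Complex.I) by
      push_cast; ring,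
    Complex.norm_add_mul_I, Real.sq_sqrt (by positivity), neg_sq]

lemma abs_deriv_gProf {σ z : ℝ} (hσ : 2 ≤ σ) (hz0 : 0 < z) (hz1 : z < 1) (x : ℝ) :
    ‖deriv (gProf σ z) x‖ ^ 2 =
      ((1 - z ^ 2) ^ (1 / (2 * σ)) * (Real.sqrt (1 - z ^ 2) *
          hD σ z (Real.sqrt (1 - z ^ 2) * x))) ^ 2 +
      (((1 - z ^ 2) ^ (1 / (2 * σ)) * hProf σ z (Real.sqrt (1 - z ^ 2) * x)) *
        (Real.sqrt (1 - z ^ 2) * (Real.sqrt (1 - z ^ 2) *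
          hProf σ z (Real.sqrt (1 - z ^ 2) * x) ^ (2 * σ)))) ^ 2 := by
  rw [(hasDerivAt_gProf hσ hz0 hz1 x).deriv]
  exact abs_expr_sq _ _ _ _

/-- For `σ ≥ 2`: the exact identity `‖g_z‖_{L²} = (1−z²)^{1/(2σ)−1/4}‖h_z‖_{L²}`, and a
`z`-uniform bound `‖g_z'‖_{L²} ≤ C (1−z²)^{1/(2σ)+1/4}`. -/
theorem gProf_L2_identity_and_deriv_bound (σ : ℝ) (hσ : 2 ≤ σ) :
    (∀ z ∈ Set.Ioo (0 : ℝ) 1,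
      Real.sqrt (∫ x : ℝ, ‖gProf σ z x‖ ^ 2) =
        (1 - z ^ 2) ^ (1 / (2 * σ) - 1 / 4) * Real.sqrt (∫ x : ℝ, hProf σ z x ^ 2)) ∧
    ∃ C : ℝ, 0 < C ∧ ∀ z ∈ Set.Ioo (0 : ℝ) 1,
      Real.sqrt (∫ x : ℝ, ‖deriv (gProf σ z) x‖ ^ 2) ≤
        C * (1 - z ^ 2) ^ (1 / (2 * σ) + 1 / 4) := by
  have hσ0 : (0:ℝ) < σ := by linarith
  constructor
  · -- Part 1
    intro z hz
    obtain ⟨hz0, hz1⟩ := hz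
    have hw : (0:ℝ) < 1 - z ^ 2 := by nlinarith
    have hs : 0 < Real.sqrt (1 - z ^ 2) := Real.sqrt_pos.mpr hw
    have hstep : (∫ x : ℝ, ‖gProf σ z x‖ ^ 2) =
        |(Real.sqrt (1 - z ^ 2))⁻¹| • ∫ y : ℝ,
          ((1 - z ^ 2) ^ (1 / (2 * σ)) * hProf σ z y) ^ 2 := by
      rw [← MeasureTheory.Measure.integral_comp_mul_left
        (fun y => ((1 - z ^ 2) ^ (1 / (2 * σ)) * hProf σ z y) ^ 2) (Real.sqrt (1 - z ^ 2))]
      congr 1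
      funext x
      simpa using congrArg (fun t : ℝ => t ^ 2) (gProf_abs hz0.le hz1.le x)
    have h2 : (∫ y : ℝ, ((1 - z ^ 2) ^ (1 / (2 * σ)) * hProf σ z y) ^ 2)
        = ((1 - z ^ 2) ^ (1 / (2 * σ))) ^ 2 * ∫ y : ℝ, hProf σ z y ^ 2 := by
      simp_rw [mul_pow]
      exact integral_const_mul _ _
    rw [hstep, smul_eq_mul, h2, abs_of_pos (inv_pos.mpr hs), ← mul_assoc,
      Real.sqrt_mul (by positivity) (∫ y : ℝ, hProf σ z y ^ 2)]
    congr 1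
    have e1 : (Real.sqrt (1 - z ^ 2))⁻¹ * ((1 - z ^ 2) ^ (1 / (2 * σ))) ^ 2
        = (1 - z ^ 2) ^ (1 / σ - 1 / 2) := by
      rw [Real.sqrt_eq_rpow, ← Real.rpow_neg hw.le,
        ← Real.rpow_natCast ((1 - z ^ 2) ^ (1 / (2 * σ))) 2, ← Real.rpow_mul hw.le,
        ← Real.rpow_add hw]
      congr 1
      push_cast
      field_simp
      ring
    rw [e1, Real.sqrt_eq_rpow, ← Real.rpow_mul hw.le]
    congr 1
    field_simp
    ring
  · -- Part 2
    set K : ℝ := ∫ y : ℝ, 2 * Real.exp (-(2 * |y|)) with hKdef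
    have hK0 : 0 ≤ K := integral_nonneg fun y => by positivity
    clear_value K
    refine ⟨Real.sqrt (2 * K) + 1, by positivity, ?_⟩
    intro z hz
    obtain ⟨hz0, hz1⟩ := hz
    have hw : (0:ℝ) < 1 - z ^ 2 := by nlinarith
    set s : ℝ := Real.sqrt (1 - z ^ 2) with hsdef
    set A : ℝ := (1 - z ^ 2) ^ (1 / (2 * σ)) with hAdef
    have hs : 0 < s := Real.sqrt_pos.mpr hw
    have hA : 0 < A := Real.rpow_pos_of_pos hw _
    have hA2 : (0:ℝ) < A ^ 2 := pow_pos hA 2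
    clear_value s A
    have hs1 : s ≤ 1 := by
      rw [hsdef]
      have := Real.sqrt_le_sqrt (show 1 - z ^ 2 ≤ 1 by nlinarith)
      simpa using this
    have hB : Integrable (fun y : ℝ => 2 * Real.exp (-(2 * |y|))) :=
      integrable_exp_neg_two_abs.const_mul 2
    have hint1 : Integrable (fun y : ℝ => hD σ z y ^ 2) := by
      refine Integrable.mono' hB ((continuous_hD hz0.le).pow 2).aestronglyMeasurable
        (Filter.Eventually.of_forall fun y => ?_)
      rw [Real.norm_eq_abs, abs_of_nonneg (sq_nonneg _)]
      exact le_trans (hD_sq_le hσ hz0.le y) (cosh_rpow_bound hσ y)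
    have hint2 : Integrable (fun y : ℝ => (hProf σ z y * hProf σ z y ^ (2 * σ)) ^ 2) := by
      have hc : Continuous fun y : ℝ => hProf σ z y ^ (2 * σ) :=
        Continuous.rpow_const (continuous_hProf hz0.le)
          (fun y => Or.inl (hProf_pos hz0.le y).ne')
      refine Integrable.mono'
        hB (((continuous_hProf hz0.le).mul hc).pow 2).aestronglyMeasurable
        (Filter.Eventually.of_forall fun y => ?_)
      rw [Real.norm_eq_abs, abs_of_nonneg (sq_nonneg _)]
      exact le_trans (hProf_mul_sq_le hσ hz0.le y) (cosh_rpow_bound hσ y)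
    have hI1le : (∫ y : ℝ, hD σ z y ^ 2) ≤ K := by
      rw [hKdef]
      exact integral_mono hint1 hB fun y =>
        le_trans (hD_sq_le hσ hz0.le y) (cosh_rpow_bound hσ y)
    have hI2le : (∫ y : ℝ, (hProf σ z y * hProf σ z y ^ (2 * σ)) ^ 2) ≤ K := by
      rw [hKdef]
      exact integral_mono hint2 hB fun y =>
        le_trans (hProf_mul_sq_le hσ hz0.le y) (cosh_rpow_bound hσ y)
    have hstep : (∫ x : ℝ, ‖deriv (gProf σ z) x‖ ^ 2) =
        |s⁻¹| • ∫ y : ℝ, ((A * (s * hD σ z y)) ^ 2 +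
          ((A * hProf σ z y) * (s * (s * hProf σ z y ^ (2 * σ)))) ^ 2) := by
      rw [← MeasureTheory.Measure.integral_comp_mul_left
        (fun y => (A * (s * hD σ z y)) ^ 2 +
          ((A * hProf σ z y) * (s * (s * hProf σ z y ^ (2 * σ)))) ^ 2) s]
      congr 1
      funext x
      have h := abs_deriv_gProf hσ hz0 hz1 x
      rw [← hsdef, ← hAdef] at h
      simpa using h
    have hsplit : (∫ y : ℝ, ((A * (s * hD σ z y)) ^ 2 +
          ((A * hProf σ z y) * (s * (s * hProf σ z y ^ (2 * σ)))) ^ 2)) =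
        (A * s) ^ 2 * (∫ y : ℝ, hD σ z y ^ 2) +
        (A * s ^ 2) ^ 2 * (∫ y : ℝ, (hProf σ z y * hProf σ z y ^ (2 * σ)) ^ 2) := by
      have hpt : ∀ y : ℝ, (A * (s * hD σ z y)) ^ 2 +
          ((A * hProf σ z y) * (s * (s * hProf σ z y ^ (2 * σ)))) ^ 2
          = (A * s) ^ 2 * hD σ z y ^ 2 +
            (A * s ^ 2) ^ 2 * (hProf σ z y * hProf σ z y ^ (2 * σ)) ^ 2 := fun y => by ring
      simp_rw [hpt]
      rw [integral_add (hint1.const_mul _) (hint2.const_mul _),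
        integral_const_mul, integral_const_mul]
    have hI10 : 0 ≤ ∫ y : ℝ, hD σ z y ^ 2 := integral_nonneg fun y => sq_nonneg _
    have hI20 : 0 ≤ ∫ y : ℝ, (hProf σ z y * hProf σ z y ^ (2 * σ)) ^ 2 :=
      integral_nonneg fun y => sq_nonneg _
    rw [hstep, smul_eq_mul, hsplit, abs_of_pos (inv_pos.mpr hs)]
    have hbound : s⁻¹ * ((A * s) ^ 2 * (∫ y : ℝ, hD σ z y ^ 2) +
        (A * s ^ 2) ^ 2 * (∫ y : ℝ, (hProf σ z y * hProf σ z y ^ (2 * σ)) ^ 2))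
        ≤ 2 * K * (A ^ 2 * s) := by
      have heq : s⁻¹ * ((A * s) ^ 2 * (∫ y : ℝ, hD σ z y ^ 2) +
          (A * s ^ 2) ^ 2 * (∫ y : ℝ, (hProf σ z y * hProf σ z y ^ (2 * σ)) ^ 2))
          = A ^ 2 * s * (∫ y : ℝ, hD σ z y ^ 2) +
            A ^ 2 * s ^ 3 * (∫ y : ℝ, (hProf σ z y * hProf σ z y ^ (2 * σ)) ^ 2) := by
        field_simp
      rw [heq]
      have hs3 : s ^ 3 ≤ s := by nlinarith
      have c1 := mul_le_mul_of_nonneg_left hI1le (mul_pos hA2 hs).le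
      have c2 := mul_le_mul_of_nonneg_left hI2le (mul_pos hA2 (pow_pos hs 3)).le
      have c3 := mul_le_mul_of_nonneg_left hs3 (mul_nonneg hA2.le hK0)
      nlinarith [c1, c2, c3]
    calc Real.sqrt (s⁻¹ * ((A * s) ^ 2 * (∫ y : ℝ, hD σ z y ^ 2) +
          (A * s ^ 2) ^ 2 * (∫ y : ℝ, (hProf σ z y * hProf σ z y ^ (2 * σ)) ^ 2)))
        ≤ Real.sqrt (2 * K * (A ^ 2 * s)) := Real.sqrt_le_sqrt hbound
      _ = Real.sqrt (2 * K) * (A * Real.sqrt s) := by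
          rw [Real.sqrt_mul (by linarith : (0:ℝ) ≤ 2 * K) (A ^ 2 * s),
            Real.sqrt_mul (sq_nonneg A) s, Real.sqrt_sq hA.le]
      _ = Real.sqrt (2 * K) * (1 - z ^ 2) ^ (1 / (2 * σ) + 1 / 4) := by
          congr 1
          rw [hAdef, hsdef, Real.sqrt_eq_rpow (1 - z ^ 2),
            Real.sqrt_eq_rpow ((1 - z ^ 2) ^ ((1:ℝ) / 2)), ← Real.rpow_mul hw.le,
            ← Real.rpow_add hw]
          norm_num
      _ ≤ (Real.sqrt (2 * K) + 1) * (1 - z ^ 2) ^ (1 / (2 * σ) + 1 / 4) := by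
          have h1 : (0:ℝ) ≤ (1 - z ^ 2) ^ (1 / (2 * σ) + 1 / 4) := Real.rpow_nonneg hw.le _
          nlinarith [Real.sqrt_nonneg (2 * K)]
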